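/- Let n ≥ 1 and let K, B be symmetric real n×n matrices such that d := (trace K)² − trace(K·K) > 0 (so in particular K ≠ 0 and trace(K·K) > 0). Set π := K − (trace K)·1 and I := trace(B·B) − (trace B)² + (trace(π·B))²/d. Then I ≥ 0, and I = 0 if and only if B = (trace(K·B)/trace(K·K))·K. -/

import Mathlib

/-- For a symmetric real matrix, `trace (A * A)` is the sum of squares of entries. -/
lemma trace_sq_eq_sum_sq {n : ℕ} (A : Matrix (Fin n) (Fin n) ℝ) (hA : A.IsSymm) :
    (A * A).trace = ∑ i, ∑ j, (A i j) ^ 2 := by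
  rw [Matrix.trace]
  simp only [Matrix.diag_apply, Matrix.mul_apply]
  refine Finset.sum_congr rfl fun i _ => Finset.sum_congr rfl fun j _ => ?_
  rw [hA.apply i j]; ring

lemma trace_sq_nonneg {n : ℕ} (A : Matrix (Fin n) (Fin n) ℝ) (hA : A.IsSymm) :
    0 ≤ (A * A).trace := by
  rw [trace_sq_eq_sum_sq A hA]
  positivity

lemma eq_zero_of_trace_sq_eq_zero {n : ℕ} (A : Matrix (Fin n) (Fin n) ℝ) (hA : A.IsSymm)
    (h : (A * A).trace = 0) : A = 0 := by
  rw [trace_sq_eq_sum_sq A hA] at h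
  ext i j
  have h1 : ∀ i ∈ Finset.univ, (0:ℝ) ≤ ∑ j, (A i j) ^ 2 := fun i _ => by positivity
  have h2 := (Finset.sum_eq_zero_iff_of_nonneg h1).mp h i (Finset.mem_univ i)
  have h3 : ∀ j ∈ Finset.univ, (0:ℝ) ≤ (A i j) ^ 2 := fun j _ => by positivity
  have h4 := (Finset.sum_eq_zero_iff_of_nonneg h3).mp h2 j (Finset.mem_univ j)
  have := pow_eq_zero_iff (n := 2) (by norm_num) |>.mp h4
  simpa using this

/-- Pointwise nonnegativity of the thin-sandwich integrand and
characterization of its vanishing. -/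
theorem thin_sandwich_integrand_nonneg
    {n : ℕ} (hn : 1 ≤ n) (K B : Matrix (Fin n) (Fin n) ℝ)
    (hK : K.IsSymm) (hB : B.IsSymm)
    (hd : 0 < K.trace ^ 2 - (K * K).trace) :
    0 ≤ (B * B).trace - B.trace ^ 2
        + (((K - K.trace • (1 : Matrix (Fin n) (Fin n) ℝ)) * B).trace) ^ 2
          / (K.trace ^ 2 - (K * K).trace)
    ∧ ((B * B).trace - B.trace ^ 2
        + (((K - K.trace • (1 : Matrix (Fin n) (Fin n) ℝ)) * B).trace) ^ 2
          / (K.trace ^ 2 - (K * K).trace) = 0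
        ↔ B = ((K * B).trace / (K * K).trace) • K) := by
  set t := K.trace with ht
  set k := (K * K).trace with hkdef
  set p := (K * B).trace with hpdef
  set s := B.trace with hs
  set b := (B * B).trace with hb
  -- k > 0
  have hKne : K ≠ 0 := by
    intro h
    have h1 : t ^ 2 - k = 0 := by rw [ht, hkdef, h]; simp
    linarith
  have hk0 : 0 < k := by
    rcases lt_or_eq_of_le (trace_sq_nonneg K hK) with h | h
    · exact h
    · exact absurd (eq_zero_of_trace_sq_eq_zero K hK h.symm) hKne
  have hkne : k ≠ 0 := ne_of_gt hk0
  have hdne : t ^ 2 - k ≠ 0 := ne_of_gt hd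
  -- trace of π * B
  have hpi : ((K - t • (1 : Matrix (Fin n) (Fin n) ℝ)) * B).trace = p - t * s := by
    rw [Matrix.sub_mul, Matrix.trace_sub, smul_mul_assoc, one_mul, Matrix.trace_smul,
      smul_eq_mul]
  -- the orthogonal decomposition
  set α := p / k with hα
  set W := B - α • K with hW
  have hWsymm : W.IsSymm := hB.sub (hK.smul α)
  have hKW : (K * W).trace = 0 := by
    rw [hW, Matrix.mul_sub, Matrix.trace_sub, Matrix.mul_smul, Matrix.trace_smul, smul_eq_mul,
      hα]
    field_simp
    rw [hpdef, hkdef]; ring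
  have hWK : (W * K).trace = 0 := by rw [Matrix.trace_mul_comm]; exact hKW
  set w := (W * W).trace with hw
  set u := W.trace with hu
  have hu' : u = s - α * t := by
    rw [hu, hW, Matrix.trace_sub, Matrix.trace_smul, smul_eq_mul]
  have hBeq : B = α • K + W := by rw [hW]; abel
  have hbb : b = α ^ 2 * k + w := by
    rw [hb]
    conv_lhs => rw [hBeq]
    simp only [Matrix.add_mul, Matrix.mul_add, Matrix.trace_add, smul_mul_assoc,
      Matrix.mul_smul, Matrix.trace_smul, hKW, hWK, smul_eq_mul, mul_zero, smul_zero]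
    rw [hw]
    ring
  -- nonnegativity facts
  have hwnn : 0 ≤ w := trace_sq_nonneg W hWsymm
  -- the key algebraic identity
  have hI : b - s ^ 2 + (p - t * s) ^ 2 / (t ^ 2 - k)
      = w + k * u ^ 2 / (t ^ 2 - k) := by
    rw [hbb, hu', hα]
    field_simp
    ring
  have hterm : 0 ≤ k * u ^ 2 / (t ^ 2 - k) := by positivity
  constructor
  · rw [hpi, hI]
    linarith
  · rw [hpi, hI]
    constructor
    · intro h
      have hw0 : w = 0 := by
        have : k * u ^ 2 / (t ^ 2 - k) = 0 := by linarith
        linarith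
      have hW0 : W = 0 := eq_zero_of_trace_sq_eq_zero W hWsymm hw0
      have : B - α • K = 0 := by rw [← hW]; exact hW0
      have hB' : B = α • K := by
        rw [sub_eq_zero] at this; exact this
      rw [hB', hα]
    · intro h
      have hW0 : W = 0 := by
        rw [hW, h, hα]
        simp
      have hw0 : w = 0 := by rw [hw, hW0]; simp
      have hu0 : u = 0 := by rw [hu, hW0]; simp
      rw [hw0, hu0]
      simp
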